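/- Let ⟪−,−⟫ be an n-graded double bracket on a graded algebra A, M a coalgebra, and v a cyclic bilinear form on M. For any coalgebra automorphism ω ∈ Aut(M) and any x, y ∈ A_M, one has ⟨ωx, ωy⟩_v = ω⟨x, y⟩_{v^ω}, where Aut(M) acts on A_M by graded algebra automorphisms via ω·a_α = a_{ω(α)} and v^ω = v∘(ω⊗ω). In particular, the bracket ⟨−,−⟩_v on A_M is preserved by the isotropy group {ω ∈ Aut(M) : v^ω = v}. -/

import Mathlib

open TensorProduct

namespace PG

variable {K : Type} [CommRing K]

section Coalgebra

variable {M : Type} [AddCommGroup M] [Module K M]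

/-- Coassociativity of a comultiplication `μ : M → M ⊗ M`. -/
def Coassoc (μ : M →ₗ[K] M ⊗[K] M) : Prop :=
  (TensorProduct.assoc K M M M).toLinearMap ∘ₗ (μ.rTensor M) ∘ₗ μ = (μ.lTensor M) ∘ₗ μ

/-- The iterated comultiplication `μ² : M → M ⊗ (M ⊗ M)`. -/
noncomputable def comul2 (μ : M →ₗ[K] M ⊗[K] M) : M →ₗ[K] M ⊗[K] (M ⊗[K] M) :=
  (μ.lTensor M) ∘ₗ μ

/-- The flip `p₂₁ : M ⊗ M → M ⊗ M`. -/
noncomputable def flipT (K M : Type) [CommRing K] [AddCommGroup M] [Module K M] :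
    M ⊗[K] M →ₗ[K] M ⊗[K] M :=
  (TensorProduct.comm K M M).toLinearMap

/-- The map `v̂ : M ⊗ M → M ⊗ M`, `v̂(α ⊗ β) = v(α ⊗ β²) β¹ ⊗ β³`, associated with a
bilinear form `v` on a coalgebra `(M, μ)`. -/
noncomputable def hat (μ : M →ₗ[K] M ⊗[K] M) (v : M ⊗[K] M →ₗ[K] K) :
    M ⊗[K] M →ₗ[K] M ⊗[K] M :=
  (LinearMap.lTensor M (TensorProduct.lid K M).toLinearMap)
  ∘ₗ (LinearMap.lTensor M (LinearMap.rTensor M v))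
  ∘ₗ (LinearMap.lTensor M (TensorProduct.assoc K M M M).symm.toLinearMap)
  ∘ₗ (TensorProduct.assoc K M M (M ⊗[K] M)).toLinearMap
  ∘ₗ (LinearMap.rTensor (M ⊗[K] M) (TensorProduct.comm K M M).toLinearMap)
  ∘ₗ (TensorProduct.assoc K M M (M ⊗[K] M)).symm.toLinearMap
  ∘ₗ (LinearMap.lTensor M (comul2 μ))

/-- A bilinear form `v` on a coalgebra `(M, μ)` is cyclic if `v̂` commutes with the flip. -/
noncomputable def IsCyclic (μ : M →ₗ[K] M ⊗[K] M) (v : M ⊗[K] M →ₗ[K] K) : Prop :=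
  (hat μ v) ∘ₗ flipT K M = flipT K M ∘ₗ (hat μ v)

/-- `ε : M → K` is a counit for the comultiplication `μ`. -/
def IsCounit (μ : M →ₗ[K] M ⊗[K] M) (ε : M →ₗ[K] K) : Prop :=
  ∀ α : M, (TensorProduct.lid K M) ((ε.rTensor M) (μ α)) = α ∧
    (TensorProduct.rid K M) ((ε.lTensor M) (μ α)) = α

/-- The convolution product on the dual of a coalgebra: `(f * g)(α) = f(α¹) g(α²)`. -/
noncomputable def conv (μ : M →ₗ[K] M ⊗[K] M) (f g : M →ₗ[K] K) : M →ₗ[K] K :=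
  (LinearMap.mul' K K) ∘ₗ (TensorProduct.map f g) ∘ₗ μ

/-- The inner action `α ↦ w(α¹) α² u(α³)` of a pair of dual elements on a coalgebra
(for `w = u⁻¹`, this is the inner automorphism `ᵘα`). -/
noncomputable def innerAct (μ : M →ₗ[K] M ⊗[K] M) (w u : M →ₗ[K] K) : M →ₗ[K] M :=
  (TensorProduct.rid K M).toLinearMap
  ∘ₗ (TensorProduct.lid K (M ⊗[K] K)).toLinearMap
  ∘ₗ (TensorProduct.map w (LinearMap.lTensor M u))
  ∘ₗ (LinearMap.lTensor M μ) ∘ₗ μ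

/-- The inner coderivation `δ_φ(α) = φ(α²) α¹ − φ(α¹) α²` associated with `φ ∈ M*`. -/
noncomputable def innerCoder (μ : M →ₗ[K] M ⊗[K] M) (φ : M →ₗ[K] K) : M →ₗ[K] M :=
  ((TensorProduct.rid K M).toLinearMap ∘ₗ (LinearMap.lTensor M φ) ∘ₗ μ)
  - ((TensorProduct.lid K M).toLinearMap ∘ₗ (φ.rTensor M) ∘ₗ μ)

/-- A coderivation of the coalgebra `(M, μ)`. -/
def IsCoderivation (μ : M →ₗ[K] M ⊗[K] M) (δ : M →ₗ[K] M) : Prop :=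
  μ ∘ₗ δ = (δ.rTensor M + δ.lTensor M) ∘ₗ μ

/-- `D ⊗ id` as an endomorphism of `N ⊗ (N ⊗ N)`, for an endomorphism `D` of `N ⊗ N`. -/
noncomputable def tend12 {N : Type} [AddCommGroup N] [Module K N]
    (D : N ⊗[K] N →ₗ[K] N ⊗[K] N) :
    N ⊗[K] (N ⊗[K] N) →ₗ[K] N ⊗[K] (N ⊗[K] N) :=
  (TensorProduct.assoc K N N N).toLinearMap ∘ₗ (LinearMap.rTensor N D)
    ∘ₗ (TensorProduct.assoc K N N N).symm.toLinearMap

end Coalgebra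

end PG
namespace PG

/-- The sign `(−1)^m` for an integer `m`. -/
def sgn (m : ℤ) : ℤ := (((-1 : ℤˣ) ^ m : ℤˣ) : ℤ)

section Graded

variable {K : Type} [CommRing K]
variable {A : Type} [NonUnitalRing A] [Module K A] [SMulCommClass K A A] [IsScalarTower K A A]

/-- The graded (signed) flip `a ⊗ b ↦ (−1)^{(|a|+n)(|b|+n)} b ⊗ a` on `A ⊗ A`,
for a `ℤ`-graded algebra `(A, 𝒜)`. -/
noncomputable def gflip (𝒜 : ℤ → Submodule K A) [DirectSum.Decomposition 𝒜] (n : ℤ) :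
    A ⊗[K] A →ₗ[K] A ⊗[K] A :=
  (DirectSum.toModule K (ℤ × ℤ) (A ⊗[K] A) fun pq =>
      sgn ((pq.1 + n) * (pq.2 + n)) •
        ((TensorProduct.map (𝒜 pq.2).subtype (𝒜 pq.1).subtype) ∘ₗ
          (TensorProduct.comm K (𝒜 pq.1) (𝒜 pq.2)).toLinearMap))
  ∘ₗ (TensorProduct.directSum K K (fun p : ℤ => 𝒜 p) (fun q : ℤ => 𝒜 q)).toLinearMap
  ∘ₗ (TensorProduct.map (DirectSum.decomposeLinearEquiv 𝒜).toLinearMap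
        (DirectSum.decomposeLinearEquiv 𝒜).toLinearMap)

/-- The degree-`s` part of `A ⊗ A`: the sum of the images of `𝒜 i ⊗ 𝒜 j` with `i + j = s`. -/
noncomputable def grade2 (𝒜 : ℤ → Submodule K A) (s : ℤ) : Submodule K (A ⊗[K] A) :=
  ⨆ i : ℤ, LinearMap.range (TensorProduct.map (𝒜 i).subtype (𝒜 (s - i)).subtype)

/-- An `n`-graded double bracket on a graded algebra `(A, 𝒜)`, given as a bilinear map
`db : A → A → A ⊗ A`: the grading condition, the `n`-graded antisymmetry
`⟪−,−⟫ ∘ P₂₁,ₙ = −P₂₁ ∘ ⟪−,−⟫`, and the `n`-graded Leibniz rule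
`⟪a,bc⟫ = ⟪a,b⟫c + (−1)^{|a|ₙ|b|} b⟪a,c⟫`. -/
structure IsDoubleBracket (𝒜 : ℤ → Submodule K A) [DirectSum.Decomposition 𝒜] (n : ℤ)
    (db : A →ₗ[K] A →ₗ[K] A ⊗[K] A) : Prop where
  grading : ∀ (p q : ℤ) (a b : A), a ∈ 𝒜 p → b ∈ 𝒜 q →
    db a b ∈ grade2 𝒜 (p + q + n)
  antisymm : ∀ (p q : ℤ) (a b : A), a ∈ 𝒜 p → b ∈ 𝒜 q →
    sgn ((p + n) * (q + n)) • db b a = - gflip 𝒜 0 (db a b)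
  leibniz : ∀ (p q : ℤ) (a b c : A), a ∈ 𝒜 p → b ∈ 𝒜 q →
    db a (b * c) = (LinearMap.lTensor A (LinearMap.mulRight K c)) (db a b)
      + sgn ((p + n) * q) • (LinearMap.rTensor A (LinearMap.mulLeft K b)) (db a c)

variable (𝒜 : ℤ → Submodule K A) [DirectSum.Decomposition 𝒜]

/-- The `n`-graded cyclic permutation `P₃₁₂,ₙ = (P₂₁,ₙ ⊗ id) ∘ (id ⊗ P₂₁,ₙ)` on `A ⊗ (A ⊗ A)`. -/
noncomputable def P312 (n : ℤ) : A ⊗[K] (A ⊗[K] A) →ₗ[K] A ⊗[K] (A ⊗[K] A) :=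
  tend12 (gflip 𝒜 n) ∘ₗ LinearMap.lTensor A (gflip 𝒜 n)

/-- The `n`-graded cyclic permutation `P₂₃₁,ₙ = (id ⊗ P₂₁,ₙ) ∘ (P₂₁,ₙ ⊗ id)`, which is the
inverse of `P₃₁₂,ₙ`. -/
noncomputable def P231 (n : ℤ) : A ⊗[K] (A ⊗[K] A) →ₗ[K] A ⊗[K] (A ⊗[K] A) :=
  LinearMap.lTensor A (gflip 𝒜 n) ∘ₗ tend12 (gflip 𝒜 n)

/-- The tribracket `⟪−,−,−⟫ = Σ_{i=0}^{2} P₃₁₂^i (⟪−,−⟫⊗id)(id⊗⟪−,−⟫) P₃₁₂,ₙ^{−i}` induced by an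
`n`-graded double bracket. -/
noncomputable def tribracket (n : ℤ) (db : A →ₗ[K] A →ₗ[K] A ⊗[K] A) :
    A ⊗[K] (A ⊗[K] A) →ₗ[K] A ⊗[K] (A ⊗[K] A) :=
  letI D := TensorProduct.lift db
  letI T := tend12 D ∘ₗ LinearMap.lTensor A D
  T + P312 𝒜 0 ∘ₗ T ∘ₗ P231 𝒜 n
    + P312 𝒜 0 ∘ₗ P312 𝒜 0 ∘ₗ T ∘ₗ P231 𝒜 n ∘ₗ P231 𝒜 n

/-- The submodule `[A,A]` of a graded algebra, spanned by the graded commutators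
`ab − (−1)^{|a||b|} ba` of homogeneous elements. -/
noncomputable def gradedCommutator (𝒜' : ℤ → Submodule K A) : Submodule K A :=
  Submodule.span K {x : A | ∃ (p q : ℤ) (a b : A),
    a ∈ 𝒜' p ∧ b ∈ 𝒜' q ∧ x = a * b - sgn (p * q) • (b * a)}

end Graded

end PG
namespace PG

section RepAlg

variable {K : Type} [CommRing K]
variable {A : Type} [NonUnitalRing A] [Module K A] [SMulCommClass K A A] [IsScalarTower K A A]
variable {M : Type} [AddCommGroup M] [Module K M]
variable {R : Type} [NonUnitalRing R] [Module K R] [SMulCommClass K R R] [IsScalarTower K R R]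

/-- The multiplicativity relation `(ab)_α = a_{α¹} b_{α²}` for a bilinear family
`ρ : A → M → R` of elements of an algebra `R`. -/
def MulRel (μ : M →ₗ[K] M ⊗[K] M) (ρ : A →ₗ[K] M →ₗ[K] R) : Prop :=
  ∀ (a b : A) (α : M),
    ρ (a * b) α = LinearMap.mul' K R (TensorProduct.map (ρ a) (ρ b) (μ α))

/-- The grading condition: `a_α` is homogeneous of degree `|a|`. -/
def GradRel (𝒜 : ℤ → Submodule K A) (ℛ : ℤ → Submodule K R) (ρ : A →ₗ[K] M →ₗ[K] R) : Prop :=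
  ∀ (p : ℤ) (a : A), a ∈ 𝒜 p → ∀ α : M, ρ a α ∈ ℛ p

/-- The generation condition: the symbols `a_α` generate `R` as a (non-unital) algebra. -/
def GenRel (ρ : A →ₗ[K] M →ₗ[K] R) : Prop :=
  NonUnitalAlgebra.adjoin K {x : R | ∃ (a : A) (α : M), ρ a α = x} = ⊤

/-- The universal property of the representation algebra `A_M` among commutative graded
algebras: any bilinear family satisfying the grading and multiplicativity relations in a
commutative graded algebra `B` is induced by a unique graded algebra homomorphism `R → B`. -/
def UnivRelComm (μ : M →ₗ[K] M ⊗[K] M) (𝒜 : ℤ → Submodule K A) (ℛ : ℤ → Submodule K R)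
    (ρ : A →ₗ[K] M →ₗ[K] R) : Prop :=
  ∀ (B : Type) [NonUnitalCommRing B] [Module K B] [SMulCommClass K B B] [IsScalarTower K B B],
  ∀ (ℬ : ℤ → Submodule K B) (σ : A →ₗ[K] M →ₗ[K] B),
    GradRel 𝒜 ℬ σ → MulRel μ σ →
    ∃! F : R →ₙₐ[K] B, (∀ (p : ℤ) (x : R), x ∈ ℛ p → F x ∈ ℬ p) ∧
      ∀ (a : A) (α : M), F (ρ a α) = σ a α

/-- The universal property of the algebra `Ã_M` among all graded algebras. -/
def UnivRelNC (μ : M →ₗ[K] M ⊗[K] M) (𝒜 : ℤ → Submodule K A) (ℛ : ℤ → Submodule K R)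
    (ρ : A →ₗ[K] M →ₗ[K] R) : Prop :=
  ∀ (B : Type) [NonUnitalRing B] [Module K B] [SMulCommClass K B B] [IsScalarTower K B B],
  ∀ (ℬ : ℤ → Submodule K B) (σ : A →ₗ[K] M →ₗ[K] B),
    GradRel 𝒜 ℬ σ → MulRel μ σ →
    ∃! F : R →ₙₐ[K] B, (∀ (p : ℤ) (x : R), x ∈ ℛ p → F x ∈ ℬ p) ∧
      ∀ (a : A) (α : M), F (ρ a α) = σ a α

/-- `(R, ℛ, ρ)` is the representation algebra `A_M` of the graded algebra `(A, 𝒜)` with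
respect to the coalgebra `(M, μ)`: `R` is commutative, the symbols `ρ a α = a_α` satisfy
the defining relations of `A_M`, generate `R`, and `R` has the universal property. -/
structure IsRepAlgebra (μ : M →ₗ[K] M ⊗[K] M) (𝒜 : ℤ → Submodule K A)
    (ℛ : ℤ → Submodule K R) (ρ : A →ₗ[K] M →ₗ[K] R) : Prop where
  comm : ∀ x y : R, x * y = y * x
  mul_rel : MulRel μ ρ
  grad_rel : GradRel 𝒜 ℛ ρ
  gen_rel : GenRel ρ
  univ_rel : UnivRelComm μ 𝒜 ℛ ρ

/-- `(S, 𝒮, ρ)` is the algebra `Ã_M` of the graded algebra `(A, 𝒜)` with respect to the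
coalgebra `(M, μ)`. -/
structure IsTildeRepAlgebra (μ : M →ₗ[K] M ⊗[K] M) (𝒜 : ℤ → Submodule K A)
    (ℛ : ℤ → Submodule K R) (ρ : A →ₗ[K] M →ₗ[K] R) : Prop where
  mul_rel : MulRel μ ρ
  grad_rel : GradRel 𝒜 ℛ ρ
  gen_rel : GenRel ρ
  univ_rel : UnivRelNC μ 𝒜 ℛ ρ

/-- The pairing `(A ⊗ A) ⊗ (M ⊗ M) → R`, `(x ⊗ y) ⊗ (γ ⊗ δ) ↦ x_γ · y_δ`. -/
noncomputable def pair2 (ρ : A →ₗ[K] M →ₗ[K] R) :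
    (A ⊗[K] A) ⊗[K] (M ⊗[K] M) →ₗ[K] R :=
  (LinearMap.mul' K R) ∘ₗ (TensorProduct.map (TensorProduct.lift ρ) (TensorProduct.lift ρ))
    ∘ₗ (TensorProduct.tensorTensorTensorComm K A A M M).toLinearMap

/-- The pairing `(A ⊗ (A ⊗ A)) ⊗ (M ⊗ (M ⊗ M)) → R`,
`(x ⊗ (y ⊗ z)) ⊗ (γ ⊗ (δ ⊗ η)) ↦ x_γ · (y_δ · z_η)`. -/
noncomputable def pair3 (ρ : A →ₗ[K] M →ₗ[K] R) :
    (A ⊗[K] (A ⊗[K] A)) ⊗[K] (M ⊗[K] (M ⊗[K] M)) →ₗ[K] R :=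
  (LinearMap.mul' K R) ∘ₗ (TensorProduct.map (TensorProduct.lift ρ) (pair2 ρ))
    ∘ₗ (TensorProduct.tensorTensorTensorComm K A (A ⊗[K] A) M (M ⊗[K] M)).toLinearMap

/-- An `n`-graded biderivation on a graded algebra `(R, ℛ)`. -/
structure IsBider (ℛ : ℤ → Submodule K R) (n : ℤ) (br : R →ₗ[K] R →ₗ[K] R) : Prop where
  grading : ∀ (p q : ℤ) (x y : R), x ∈ ℛ p → y ∈ ℛ q → br x y ∈ ℛ (p + q + n)
  antisymm : ∀ (p q : ℤ) (x y : R), x ∈ ℛ p → y ∈ ℛ q →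
    br x y = - (sgn ((p + n) * (q + n)) • br y x)
  leibniz : ∀ (p q : ℤ) (x y : R), x ∈ ℛ p → y ∈ ℛ q → ∀ z : R,
    br x (y * z) = br x y * z + sgn ((p + n) * q) • (y * br x z)

/-- The defining formula `⟨a_α, b_β⟩_v = v(α ⊗ β²) ⟪a,b⟫′_{β¹} ⟪a,b⟫″_{β³}` of the bracket
induced on the representation algebra by a double bracket `db` and a bilinear form `v`. -/
noncomputable def BrFormula (μ : M →ₗ[K] M ⊗[K] M) (v : M ⊗[K] M →ₗ[K] K)
    (db : A →ₗ[K] A →ₗ[K] A ⊗[K] A) (ρ : A →ₗ[K] M →ₗ[K] R)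
    (br : R →ₗ[K] R →ₗ[K] R) : Prop :=
  ∀ (a b : A) (α β : M),
    br (ρ a α) (ρ b β) = pair2 ρ ((db a b) ⊗ₜ[K] (hat μ v (α ⊗ₜ[K] β)))

/-- A degree-zero derivation of a graded algebra `(R, ℛ)`. -/
def IsGDer (ℛ : ℤ → Submodule K R) (D : R →ₗ[K] R) : Prop :=
  (∀ (p : ℤ) (x : R), x ∈ ℛ p → D x ∈ ℛ p) ∧ ∀ x y : R, D (x * y) = D x * y + x * D y

/-- The Jacobi form of an `n`-graded bracket, evaluated on elements of degrees `p, q, r`. -/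
noncomputable def jacobiForm (n : ℤ) (br : R →ₗ[K] R →ₗ[K] R) (p q r : ℤ) (x y z : R) : R :=
  sgn ((p + n) * (r + n)) • br x (br y z) + sgn ((q + n) * (p + n)) • br y (br z x)
    + sgn ((r + n) * (q + n)) • br z (br x y)

/-- The fixed-point set `A_M^U` of the action of the group `U(M*)` of invertible elements of
the dual algebra `M*` on `R = A_M` (given by `u · a_α = a_{ᵘα}` on generators). -/
def fixUSet (μ : M →ₗ[K] M ⊗[K] M) (ε : M →ₗ[K] K) (ρ : A →ₗ[K] M →ₗ[K] R) : Set R :=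
  {x : R | ∀ u w : M →ₗ[K] K, conv μ u w = ε → conv μ w u = ε →
    ∀ F : R →ₙₐ[K] R, (∀ (a : A) (α : M), F (ρ a α) = ρ a (innerAct μ w u α)) → F x = x}

/-- The set `A_M^M` of elements of `R = A_M` annihilated by the derivations induced by all
inner coderivations `δ_φ`, `φ ∈ M*`. -/
def fixMSet (μ : M →ₗ[K] M ⊗[K] M) (ℛ : ℤ → Submodule K R) (ρ : A →ₗ[K] M →ₗ[K] R) : Set R :=
  {x : R | ∀ φ : M →ₗ[K] K, ∀ D : R →ₗ[K] R, IsGDer ℛ D →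
    (∀ (a : A) (α : M), D (ρ a α) = ρ a (innerCoder μ φ α)) → D x = 0}

end RepAlg

end PG
namespace PGAux

open PG TensorProduct

variable {K M : Type} [CommRing K] [AddCommGroup M] [Module K M]

/-- The tail of `hat` (everything after `lTensor M (comul2 μ)`). -/
noncomputable def chain (v : M ⊗[K] M →ₗ[K] K) :
    M ⊗[K] (M ⊗[K] (M ⊗[K] M)) →ₗ[K] M ⊗[K] M :=
  (LinearMap.lTensor M (TensorProduct.lid K M).toLinearMap)
  ∘ₗ (LinearMap.lTensor M (LinearMap.rTensor M v))
  ∘ₗ (LinearMap.lTensor M (TensorProduct.assoc K M M M).symm.toLinearMap)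
  ∘ₗ (TensorProduct.assoc K M M (M ⊗[K] M)).toLinearMap
  ∘ₗ (LinearMap.rTensor (M ⊗[K] M) (TensorProduct.comm K M M).toLinearMap)
  ∘ₗ (TensorProduct.assoc K M M (M ⊗[K] M)).symm.toLinearMap

lemma hat_eq_chain (μ : M →ₗ[K] M ⊗[K] M) (v : M ⊗[K] M →ₗ[K] K) (x : M ⊗[K] M) :
    hat μ v x = chain v ((LinearMap.lTensor M (comul2 μ)) x) := rfl

lemma chain_nat (v : M ⊗[K] M →ₗ[K] K) (ω : M ≃ₗ[K] M) :
    chain (K := K) (M := M) v ∘ₗ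
      TensorProduct.map ω.toLinearMap
        (TensorProduct.map ω.toLinearMap (TensorProduct.map ω.toLinearMap ω.toLinearMap))
    = TensorProduct.map ω.toLinearMap ω.toLinearMap ∘ₗ
        chain (v ∘ₗ TensorProduct.map ω.toLinearMap ω.toLinearMap) := by
  ext α β₁ β₂ β₃
  simp [chain, TensorProduct.smul_tmul']

lemma comul2_nat (μ : M →ₗ[K] M ⊗[K] M) (ω : M ≃ₗ[K] M)
    (hω : μ ∘ₗ ω.toLinearMap = TensorProduct.map ω.toLinearMap ω.toLinearMap ∘ₗ μ) (β : M) :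
    comul2 μ (ω β)
      = TensorProduct.map ω.toLinearMap
          (TensorProduct.map ω.toLinearMap ω.toLinearMap) (comul2 μ β) := by
  have hμω : ∀ γ : M, μ (ω γ) = TensorProduct.map ω.toLinearMap ω.toLinearMap (μ γ) := by
    intro γ
    exact congrArg (fun f => f γ) hω
  have h2 : LinearMap.lTensor M μ ∘ₗ TensorProduct.map ω.toLinearMap ω.toLinearMap
      = TensorProduct.map ω.toLinearMap
          (TensorProduct.map ω.toLinearMap ω.toLinearMap) ∘ₗ LinearMap.lTensor M μ := by
    ext γ δ
    simp [hμω]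
  calc comul2 μ (ω β) = LinearMap.lTensor M μ (μ (ω β)) := rfl
    _ = LinearMap.lTensor M μ (TensorProduct.map ω.toLinearMap ω.toLinearMap (μ β)) := by
        rw [hμω]
    _ = TensorProduct.map ω.toLinearMap
          (TensorProduct.map ω.toLinearMap ω.toLinearMap) (LinearMap.lTensor M μ (μ β)) :=
        congrArg (fun f => f (μ β)) h2
    _ = _ := rfl

lemma hat_nat (μ : M →ₗ[K] M ⊗[K] M) (v : M ⊗[K] M →ₗ[K] K) (ω : M ≃ₗ[K] M)
    (hω : μ ∘ₗ ω.toLinearMap = TensorProduct.map ω.toLinearMap ω.toLinearMap ∘ₗ μ)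
    (α β : M) :
    hat μ v (ω α ⊗ₜ[K] ω β)
      = TensorProduct.map ω.toLinearMap ω.toLinearMap
          (hat μ (v ∘ₗ TensorProduct.map ω.toLinearMap ω.toLinearMap) (α ⊗ₜ[K] β)) := by
  rw [hat_eq_chain, hat_eq_chain, LinearMap.lTensor_tmul, LinearMap.lTensor_tmul,
    comul2_nat μ ω hω]
  have : (ω α) ⊗ₜ[K] (TensorProduct.map ω.toLinearMap
      (TensorProduct.map ω.toLinearMap ω.toLinearMap) (comul2 μ β))
      = TensorProduct.map ω.toLinearMap (TensorProduct.map ω.toLinearMap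
          (TensorProduct.map ω.toLinearMap ω.toLinearMap)) (α ⊗ₜ[K] comul2 μ β) := rfl
  have h2 := congrArg (fun f => f (α ⊗ₜ[K] comul2 μ β)) (chain_nat v ω)
  simp only [LinearMap.comp_apply] at h2
  rw [this, h2]


section Key

open PG TensorProduct

variable {K A M R : Type} [CommRing K]
  [NonUnitalRing A] [Module K A] [SMulCommClass K A A] [IsScalarTower K A A]
  [AddCommGroup M] [Module K M]
  [NonUnitalRing R] [Module K R] [SMulCommClass K R R] [IsScalarTower K R R]

lemma pair2_nat (ρ : A →ₗ[K] M →ₗ[K] R) (ω : M ≃ₗ[K] M)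
    (F : R →ₙₐ[K] R) (hF : ∀ (a : A) (α : M), F (ρ a α) = ρ a (ω α))
    (t : A ⊗[K] A) (s : M ⊗[K] M) :
    F (pair2 ρ (t ⊗ₜ[K] s))
      = pair2 ρ (t ⊗ₜ[K] (TensorProduct.map ω.toLinearMap ω.toLinearMap s)) := by
  induction t using TensorProduct.induction_on with
  | zero => simp
  | add t1 t2 h1 h2 =>
      simp only [add_tmul, map_add] at *
      rw [h1, h2]
  | tmul a b =>
      induction s using TensorProduct.induction_on with
      | zero => simp
      | add s1 s2 h1 h2 =>
          simp only [tmul_add, map_add] at *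
          rw [h1, h2]
      | tmul γ δ =>
          simp only [pair2, LinearMap.comp_apply, LinearEquiv.coe_coe,
            tensorTensorTensorComm_tmul, TensorProduct.map_tmul, lift.tmul,
            LinearMap.mul'_apply, map_mul, hF]

/-- The set of homogeneous generators `a_α`, `a` homogeneous. -/
def genSet (𝒜 : ℤ → Submodule K A) (ρ : A →ₗ[K] M →ₗ[K] R) : Set R :=
  {x : R | ∃ (p : ℤ) (a : A) (α : M), a ∈ 𝒜 p ∧ ρ a α = x}

lemma mon_homog (𝒜 : ℤ → Submodule K A) (ℛ : ℤ → Submodule K R) [SetLike.GradedMul ℛ]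
    (ρ : A →ₗ[K] M →ₗ[K] R) (hgr : GradRel 𝒜 ℛ ρ) :
    ∀ m ∈ Subsemigroup.closure (genSet 𝒜 ρ), ∃ q, m ∈ ℛ q := by
  intro m hm
  induction hm using Subsemigroup.closure_induction with
  | mem y hy => obtain ⟨p, a, α, ha, rfl⟩ := hy; exact ⟨p, hgr p a ha α⟩
  | mul y z _ _ hy hz =>
      obtain ⟨q1, h1⟩ := hy
      obtain ⟨q2, h2⟩ := hz
      exact ⟨q1 + q2, SetLike.mul_mem_graded h1 h2⟩

lemma span_mul_mem (C : Subsemigroup R) {x y : R}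
    (hx : x ∈ Submodule.span K (C : Set R)) (hy : y ∈ Submodule.span K (C : Set R)) :
    x * y ∈ Submodule.span K (C : Set R) := by
  induction hx, hy using Submodule.span_induction₂ with
  | mem_mem a b ha hb => exact Submodule.subset_span (Subsemigroup.mul_mem _ ha hb)
  | zero_left b hb => rw [zero_mul]; exact zero_mem _
  | zero_right a ha => rw [mul_zero]; exact zero_mem _
  | add_left a b c _ _ _ h1 h2 => rw [add_mul]; exact add_mem h1 h2
  | add_right a b c _ _ _ h1 h2 => rw [mul_add]; exact add_mem h1 h2
  | smul_left r a b _ _ h => rw [smul_mul_assoc]; exact Submodule.smul_mem _ r h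
  | smul_right r a b _ _ h => rw [mul_smul_comm]; exact Submodule.smul_mem _ r h

lemma span_closure_eq_top (μ : M →ₗ[K] M ⊗[K] M)
    (𝒜 : ℤ → Submodule K A) [DirectSum.Decomposition 𝒜] (ℛ : ℤ → Submodule K R)
    (ρ : A →ₗ[K] M →ₗ[K] R) (hrep : IsRepAlgebra μ 𝒜 ℛ ρ) :
    Submodule.span K ((Subsemigroup.closure (genSet 𝒜 ρ) : Subsemigroup R) : Set R) = ⊤ := by
  rw [eq_top_iff]
  intro x hxtop
  clear hxtop
  have hx : x ∈ NonUnitalAlgebra.adjoin K {x : R | ∃ (a : A) (α : M), ρ a α = x} := by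
    rw [hrep.gen_rel]; trivial
  induction hx using NonUnitalAlgebra.adjoin_induction with
  | mem y hy =>
      obtain ⟨a, α, rfl⟩ := hy
      refine DirectSum.Decomposition.inductionOn 𝒜
        (motive := fun a => ρ a α ∈ Submodule.span K
          ((Subsemigroup.closure (genSet 𝒜 ρ) : Subsemigroup R) : Set R)) (by simp) ?_ ?_ a
      · intro i m
        exact Submodule.subset_span (Subsemigroup.subset_closure ⟨i, m, α, m.2, rfl⟩)
      · intro a b ha hb
        rw [map_add, LinearMap.add_apply]
        exact add_mem ha hb
  | add x y _ _ hx hy => exact add_mem hx hy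
  | zero => exact zero_mem _
  | smul r x _ hx => exact Submodule.smul_mem _ r hx
  | mul x y _ _ hx hy => exact span_mul_mem _ hx hy

lemma key (μ : M →ₗ[K] M ⊗[K] M)
    (𝒜 : ℤ → Submodule K A) [DirectSum.Decomposition 𝒜]
    (ℛ : ℤ → Submodule K R) [SetLike.GradedMul ℛ]
    (ρ : A →ₗ[K] M →ₗ[K] R) (hrep : IsRepAlgebra μ 𝒜 ℛ ρ)
    (n : ℤ) (db : A →ₗ[K] A →ₗ[K] A ⊗[K] A)
    (v : M ⊗[K] M →ₗ[K] K)
    (ω : M ≃ₗ[K] M)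
    (hω : μ ∘ₗ ω.toLinearMap = TensorProduct.map ω.toLinearMap ω.toLinearMap ∘ₗ μ)
    (F : R →ₙₐ[K] R) (hFgr : ∀ (p : ℤ) (x : R), x ∈ ℛ p → F x ∈ ℛ p)
    (hF : ∀ (a : A) (α : M), F (ρ a α) = ρ a (ω α))
    (brv : R →ₗ[K] R →ₗ[K] R) (hbrv : IsBider ℛ n brv)
    (hforv : BrFormula μ v db ρ brv)
    (brw : R →ₗ[K] R →ₗ[K] R) (hbrw : IsBider ℛ n brw)
    (hforw : BrFormula μ (v ∘ₗ TensorProduct.map ω.toLinearMap ω.toLinearMap) db ρ brw) :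
    ∀ x y : R, brv (F x) (F y) = F (brw x y) := by
  have hgen : ∀ (a b : A) (α β : M),
      brv (F (ρ a α)) (F (ρ b β)) = F (brw (ρ a α) (ρ b β)) := by
    intro a b α β
    rw [hF, hF, hforv a b (ω α) (ω β), hforw a b α β, pair2_nat ρ ω F hF,
      hat_nat μ v ω hω]
  have homog := mon_homog 𝒜 ℛ ρ hrep.grad_rel
  have key1 : ∀ (p : ℤ) (a : A) (α : M), a ∈ 𝒜 p →
      ∀ m ∈ Subsemigroup.closure (genSet 𝒜 ρ),
        brv (F (ρ a α)) (F m) = F (brw (ρ a α) m) := by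
    intro p a α ha m hm
    induction hm using Subsemigroup.closure_induction with
    | mem y hy => obtain ⟨q, b, β, hb, rfl⟩ := hy; exact hgen a b α β
    | mul y z hy hz ihy ihz =>
        obtain ⟨q1, hy1⟩ := homog y hy
        have hx : ρ a α ∈ ℛ p := hrep.grad_rel p a ha α
        rw [map_mul F y z,
          hbrv.leibniz p q1 (F (ρ a α)) (F y) (hFgr p _ hx) (hFgr q1 y hy1) (F z),
          hbrw.leibniz p q1 (ρ a α) y hx hy1 z]
        simp only [map_add, map_mul, map_zsmul]
        rw [ihy, ihz]
  have key1' : ∀ m ∈ Subsemigroup.closure (genSet 𝒜 ρ),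
      ∀ (p : ℤ) (a : A) (α : M), a ∈ 𝒜 p →
        brv (F m) (F (ρ a α)) = F (brw m (ρ a α)) := by
    intro m hm p a α ha
    obtain ⟨q, hq⟩ := homog m hm
    have hx : ρ a α ∈ ℛ p := hrep.grad_rel p a ha α
    rw [hbrv.antisymm q p (F m) (F (ρ a α)) (hFgr q m hq) (hFgr p _ hx),
      hbrw.antisymm q p m (ρ a α) hq hx,
      key1 p a α ha m hm, map_neg, map_zsmul]
  have key2 : ∀ x ∈ Subsemigroup.closure (genSet 𝒜 ρ),
      ∀ m ∈ Subsemigroup.closure (genSet 𝒜 ρ),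
        brv (F x) (F m) = F (brw x m) := by
    intro x hx m hm
    obtain ⟨p, hp⟩ := homog x hx
    induction hm using Subsemigroup.closure_induction with
    | mem y hy => obtain ⟨q, b, β, hb, rfl⟩ := hy; exact key1' x hx q b β hb
    | mul y z hy hz ihy ihz =>
        obtain ⟨q1, hy1⟩ := homog y hy
        rw [map_mul F y z,
          hbrv.leibniz p q1 (F x) (F y) (hFgr p x hp) (hFgr q1 y hy1) (F z),
          hbrw.leibniz p q1 x y hp hy1 z]
        simp only [map_add, map_mul, map_zsmul]
        rw [ihy, ihz]
  have hspan := span_closure_eq_top μ 𝒜 ℛ ρ hrep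
  intro x y
  have hx : x ∈ Submodule.span K
      ((Subsemigroup.closure (genSet 𝒜 ρ) : Subsemigroup R) : Set R) := by
    rw [hspan]; trivial
  have hy : y ∈ Submodule.span K
      ((Subsemigroup.closure (genSet 𝒜 ρ) : Subsemigroup R) : Set R) := by
    rw [hspan]; trivial
  induction hx, hy using Submodule.span_induction₂ with
  | mem_mem x y hx hy => exact key2 x hx y hy
  | zero_left y hy => simp
  | zero_right x hx => simp
  | add_left x y z hx hy hz h1 h2 => simp only [map_add, LinearMap.add_apply, h1, h2]
  | add_right x y z hx hy hz h1 h2 => simp only [map_add, LinearMap.add_apply, h1, h2]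
  | smul_left r x y hx hy h => simp only [map_smul, LinearMap.smul_apply, h]
  | smul_right r x y hx hy h => simp only [map_smul, LinearMap.smul_apply, h]

end Key

end PGAux
/-- for a coalgebra automorphism `ω` of `M` acting on `A_M` by
`ω · a_α = a_{ω(α)}`, one has `⟨ωx, ωy⟩_v = ω⟨x, y⟩_{v^ω}` with `v^ω = v ∘ (ω ⊗ ω)`; in
particular the bracket `⟨−,−⟩_v` is preserved by the isotropy group of `v`. -/
theorem statement_7 {K A M R : Type} [CommRing K]
    [NonUnitalRing A] [Module K A] [SMulCommClass K A A] [IsScalarTower K A A]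
    (𝒜 : ℤ → Submodule K A) [SetLike.GradedMul 𝒜] [DirectSum.Decomposition 𝒜]
    [AddCommGroup M] [Module K M] (μ : M →ₗ[K] M ⊗[K] M) (hμ : PG.Coassoc μ)
    [NonUnitalRing R] [Module K R] [SMulCommClass K R R] [IsScalarTower K R R]
    (ℛ : ℤ → Submodule K R) [SetLike.GradedMul ℛ] [DirectSum.Decomposition ℛ]
    (ρ : A →ₗ[K] M →ₗ[K] R) (hrep : PG.IsRepAlgebra μ 𝒜 ℛ ρ)
    (n : ℤ) (db : A →ₗ[K] A →ₗ[K] A ⊗[K] A) (hdb : PG.IsDoubleBracket 𝒜 n db)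
    (v : M ⊗[K] M →ₗ[K] K) (hv : PG.IsCyclic μ v)
    (ω : M ≃ₗ[K] M)
    (hω : μ ∘ₗ ω.toLinearMap = TensorProduct.map ω.toLinearMap ω.toLinearMap ∘ₗ μ)
    (F : R →ₙₐ[K] R) (hFgr : ∀ (p : ℤ) (x : R), x ∈ ℛ p → F x ∈ ℛ p)
    (hF : ∀ (a : A) (α : M), F (ρ a α) = ρ a (ω α))
    (brv : R →ₗ[K] R →ₗ[K] R) (hbrv : PG.IsBider ℛ n brv)
    (hforv : PG.BrFormula μ v db ρ brv)
    (brw : R →ₗ[K] R →ₗ[K] R) (hbrw : PG.IsBider ℛ n brw)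
    (hforw : PG.BrFormula μ (v ∘ₗ TensorProduct.map ω.toLinearMap ω.toLinearMap) db ρ brw) :
    (∀ x y : R, brv (F x) (F y) = F (brw x y)) ∧
    ((v ∘ₗ TensorProduct.map ω.toLinearMap ω.toLinearMap = v) →
      ∀ x y : R, brv (F x) (F y) = F (brv x y)) := by
  
  have part1 := PGAux.key μ 𝒜 ℛ ρ hrep n db v ω hω F hFgr hF brv hbrv hforv brw hbrw hforw
  refine ⟨part1, ?_⟩
  intro hveq x y
  have hω' : μ ∘ₗ (LinearEquiv.refl K M).toLinearMap
      = TensorProduct.map (LinearEquiv.refl K M).toLinearMap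
          (LinearEquiv.refl K M).toLinearMap ∘ₗ μ := by
    ext γ
    simp
  have hforw' : PG.BrFormula μ v db ρ brw := by rwa [hveq] at hforw
  have hid : v ∘ₗ TensorProduct.map (LinearEquiv.refl K M).toLinearMap
      (LinearEquiv.refl K M).toLinearMap = v := by
    ext γ δ
    simp
  have hforv' : PG.BrFormula μ (v ∘ₗ TensorProduct.map (LinearEquiv.refl K M).toLinearMap
      (LinearEquiv.refl K M).toLinearMap) db ρ brv := by rwa [hid]
  have part2 := PGAux.key μ 𝒜 ℛ ρ hrep n db v (LinearEquiv.refl K M) hω'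
    (NonUnitalAlgHom.id K R) (fun p x hx => hx) (fun a α => rfl)
    brw hbrw hforw' brv hbrv hforv'
  have h2 : brw x y = brv x y := part2 x y
  rw [part1 x y, h2]
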